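/- With g as defined: if f_L < f_H, then g(f) > 0 for every f ∈ (f_L, f_H) and g(f) < 0 for every f ∈ [0, f_L) ∪ (f_H, 1); if f_H < f_L, then g(f) < 0 for every f ∈ (f_H, f_L) and g(f) > 0 for every f ∈ [0, f_H) ∪ (f_L, 1). -/
import Mathlib


open Complex BigOperators

/-- The sign `s = sign(f_H - f_L)`. -/
noncomputable def sgnLH (fL fH : ℝ) : ℝ := Real.sign (fH - fL)

/-- The coefficient `r_0 = -2 cos(π(f_H - f_L)) · sign(f_H - f_L)`. -/
noncomputable def r0LH (fL fH : ℝ) : ℝ :=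
  -2 * Real.cos (Real.pi * (fH - fL)) * Real.sign (fH - fL)

/-- The coefficient `r_1 = e^{iπ(f_L + f_H)} · sign(f_H - f_L)`. -/
noncomputable def r1LH (fL fH : ℝ) : ℂ :=
  Complex.exp ((Real.pi : ℂ) * Complex.I * ((fL : ℂ) + (fH : ℂ))) *
    ((Real.sign (fH - fL) : ℝ) : ℂ)

/-- The trigonometric polynomial `g(f) = r_0 + 2 Re(r_1 e^{-2πi f})`. -/
noncomputable def gpoly (fL fH : ℝ) (f : ℝ) : ℝ :=
  r0LH fL fH +
    2 * (r1LH fL fH * Complex.exp (-(2 * (Real.pi : ℂ) * Complex.I * (f : ℂ)))).re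

lemma gpoly_eq (fL fH f : ℝ) : gpoly fL fH f =
    -4 * Real.sign (fH - fL) * Real.sin (Real.pi * (fH - f)) * Real.sin (Real.pi * (fL - f)) := by
  have h1 : r1LH fL fH * Complex.exp (-(2 * (Real.pi : ℂ) * Complex.I * (f : ℂ))) =
      ((Real.sign (fH - fL) : ℝ) : ℂ) * Complex.exp (((Real.pi * (fL + fH - 2*f) : ℝ) : ℂ) * Complex.I) := by
    unfold r1LH
    rw [mul_comm _ ((Real.sign (fH - fL) : ℝ) : ℂ), mul_assoc, ← Complex.exp_add]
    congr 1
    push_cast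
    ring
  rw [gpoly, h1, Complex.re_ofReal_mul, Complex.exp_ofReal_mul_I_re, r0LH]
  have := Real.cos_sub_cos (Real.pi * (fL + fH - 2*f)) (Real.pi * (fH - fL))
  have h2 : (Real.pi * (fL + fH - 2*f) + Real.pi * (fH - fL))/2 = Real.pi * (fH - f) := by ring
  have h3 : (Real.pi * (fL + fH - 2*f) - Real.pi * (fH - fL))/2 = Real.pi * (fL - f) := by ring
  rw [h2, h3] at this
  linear_combination 2 * Real.sign (fH - fL) * this

lemma sinp_pos {x : ℝ} (h0 : 0 < x) (h1 : x < 1) : 0 < Real.sin (Real.pi * x) :=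
  Real.sin_pos_of_pos_of_lt_pi (by positivity)
    (by nlinarith [Real.pi_pos])

lemma sinp_neg {x : ℝ} (h0 : -1 < x) (h1 : x < 0) : Real.sin (Real.pi * x) < 0 := by
  have : 0 < Real.sin (Real.pi * (-x)) := sinp_pos (by linarith) (by linarith)
  rw [mul_neg, Real.sin_neg] at this
  linarith

/-- Sign pattern of `g`: if `f_L < f_H` then `g > 0` on `(f_L, f_H)` and `g < 0`
on `[0, f_L) ∪ (f_H, 1)`; if `f_H < f_L` then `g < 0` on `(f_H, f_L)` and `g > 0`
on `[0, f_H) ∪ (f_L, 1)`. -/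
theorem stmt2 (fL fH : ℝ) (hL0 : 0 ≤ fL) (hL1 : fL < 1) (hH0 : 0 ≤ fH) (hH1 : fH < 1)
    (hne : fL ≠ fH) :
    (fL < fH →
      (∀ f : ℝ, fL < f → f < fH → 0 < gpoly fL fH f) ∧
      (∀ f : ℝ, (0 ≤ f ∧ f < fL) ∨ (fH < f ∧ f < 1) → gpoly fL fH f < 0)) ∧
    (fH < fL →
      (∀ f : ℝ, fH < f → f < fL → gpoly fL fH f < 0) ∧
      (∀ f : ℝ, (0 ≤ f ∧ f < fH) ∨ (fL < f ∧ f < 1) → 0 < gpoly fL fH f)) := by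
  constructor
  · intro hLH
    have hs : Real.sign (fH - fL) = 1 := Real.sign_of_pos (by linarith)
    constructor
    · intro f h1 h2
      rw [gpoly_eq, hs]
      have s1 := sinp_pos (x := fH - f) (by linarith) (by linarith)
      have s2 := sinp_neg (x := fL - f) (by linarith) (by linarith)
      nlinarith
    · rintro f (⟨h1, h2⟩ | ⟨h1, h2⟩)
      · rw [gpoly_eq, hs]
        have s1 := sinp_pos (x := fH - f) (by linarith) (by linarith)
        have s2 := sinp_pos (x := fL - f) (by linarith) (by linarith)
        nlinarith
      · rw [gpoly_eq, hs]
        have s1 := sinp_neg (x := fH - f) (by linarith) (by linarith)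
        have s2 := sinp_neg (x := fL - f) (by linarith) (by linarith)
        nlinarith
  · intro hHL
    have hs : Real.sign (fH - fL) = -1 := Real.sign_of_neg (by linarith)
    constructor
    · intro f h1 h2
      rw [gpoly_eq, hs]
      have s1 := sinp_neg (x := fH - f) (by linarith) (by linarith)
      have s2 := sinp_pos (x := fL - f) (by linarith) (by linarith)
      nlinarith
    · rintro f (⟨h1, h2⟩ | ⟨h1, h2⟩)
      · rw [gpoly_eq, hs]
        have s1 := sinp_pos (x := fH - f) (by linarith) (by linarith)
        have s2 := sinp_pos (x := fL - f) (by linarith) (by linarith)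
        nlinarith
      · rw [gpoly_eq, hs]
        have s1 := sinp_neg (x := fH - f) (by linarith) (by linarith)
        have s2 := sinp_neg (x := fL - f) (by linarith) (by linarith)
        nlinarith
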